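/- Let X₁, X₂, ... be i.i.d. random variables with values in a finite set A of cardinality a and common distribution Q. For each t, let the empirical distribution after n samples be Q̄ₙ(i) = (1/n)·#{j ≤ n : X_j = i}. Then for any n ≥ 1 and δ > 0, P(‖Q̄ₙ − Q‖₁ ≥ δ) ≤ (2^a − 2)·exp(−n δ²/2). -/

import Mathlib

open Real MeasureTheory ProbabilityTheory

lemma upos {p : ℝ} (hp0 : 0 ≤ p) (hp1 : p ≤ 1) (t : ℝ) : 0 < 1 - p + p * exp t := by
  rcases eq_or_lt_of_le hp1 with h | h
  · have := exp_pos t; nlinarith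
  · nlinarith [mul_nonneg hp0 (exp_pos t).le]

lemma hoeff_half {p : ℝ} (hp0 : 0 ≤ p) (hp1 : p ≤ 1) {t : ℝ} (ht : 0 ≤ t) :
    (1 - p) * exp (-(t * p)) + p * exp (t * (1 - p)) ≤ exp (t ^ 2 / 8) := by
  set u : ℝ → ℝ := fun t => 1 - p + p * exp t with hu
  have hupos : ∀ s, 0 < u s := fun s => upos hp0 hp1 s
  have hud : ∀ s : ℝ, HasDerivAt u (p * exp s) s := by
    intro s
    exact ((hasDerivAt_exp s).const_mul p).const_add (1 - p)
  set g : ℝ → ℝ := fun s => s / 4 + p - p * exp s / u s with hg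
  have hgd : ∀ s : ℝ, HasDerivAt g
      (1 / 4 - (p * exp s * u s - p * exp s * (p * exp s)) / (u s) ^ 2) s := by
    intro s
    have h1 : HasDerivAt (fun s : ℝ => p * exp s) (p * exp s) s := (hasDerivAt_exp s).const_mul p
    have h2 : HasDerivAt (fun s : ℝ => p * exp s / u s)
        ((p * exp s * u s - p * exp s * (p * exp s)) / (u s) ^ 2) s :=
      h1.div (hud s) (hupos s).ne'
    have h3 : HasDerivAt (fun s : ℝ => s / 4 + p) (1 / 4) s := by
      simpa using ((hasDerivAt_id s).div_const 4).add_const p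
    exact h3.sub h2
  have hg'nonneg : ∀ s : ℝ, 0 ≤ 1 / 4 - (p * exp s * u s - p * exp s * (p * exp s)) / (u s) ^ 2 := by
    intro s
    rw [sub_nonneg, div_le_iff₀ (pow_pos (hupos s) 2)]
    have h4 : p * exp s * u s - p * exp s * (p * exp s) = (p * exp s) * (1 - p) := by
      simp only [hu]; ring
    rw [h4]
    nlinarith [sq_nonneg ((1 - p) - p * exp s), sq_nonneg (u s)]
  have hgdiff : Differentiable ℝ g := fun s => (hgd s).differentiableAt
  have hgmono : Monotone g := by
    apply monotone_of_deriv_nonneg hgdiff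
    intro s
    rw [(hgd s).deriv]
    exact hg'nonneg s
  have hg0 : g 0 = 0 := by simp [hg, hu]
  have hgnonneg : ∀ s : ℝ, 0 ≤ s → 0 ≤ g s := fun s hs => hg0 ▸ hgmono hs
  set ψ : ℝ → ℝ := fun s => s ^ 2 / 8 + s * p - log (u s) with hψ
  have hψd : ∀ s : ℝ, HasDerivAt ψ (g s) s := by
    intro s
    have h1 : HasDerivAt (fun s : ℝ => s ^ 2 / 8 + s * p) (2 * s / 8 + p) s := by
      have := ((hasDerivAt_pow 2 s).div_const 8).add ((hasDerivAt_id s).mul_const p)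
      exact this.congr_deriv (by rw [show (2:ℕ) - 1 = 1 from rfl]; push_cast; ring)
    have h2 : HasDerivAt (fun s : ℝ => log (u s)) (p * exp s / u s) s :=
      (hud s).log (hupos s).ne'
    have := h1.sub h2
    exact this.congr_deriv (by simp only [hg]; ring)
  have hψmono : MonotoneOn ψ (Set.Ici (0 : ℝ)) := by
    apply monotoneOn_of_deriv_nonneg (convex_Ici 0)
      (Continuous.continuousOn (by
        have : Differentiable ℝ ψ := fun s => (hψd s).differentiableAt
        exact this.continuous))
      (fun s _ => (hψd s).differentiableAt.differentiableWithinAt)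
    intro s hs
    rw [(hψd s).deriv]
    exact hgnonneg s (le_of_lt (by simpa using hs))
  have hψ0 : ψ 0 = 0 := by simp [hψ, hu]
  have hψt : 0 ≤ ψ t := by
    have := hψmono (Set.self_mem_Ici) (Set.mem_Ici.2 ht) ht
    rwa [hψ0] at this
  -- unfold: log (u t) ≤ t^2/8 + t*p
  have hlog : log (u t) ≤ t ^ 2 / 8 + t * p := by
    simp only [hψ] at hψt; linarith
  have hut : u t ≤ exp (t ^ 2 / 8 + t * p) := by
    calc u t = exp (log (u t)) := (exp_log (hupos t)).symm
    _ ≤ _ := exp_le_exp.2 hlog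
  have key : (1 - p) * exp (-(t * p)) + p * exp (t * (1 - p)) = u t * exp (-(t * p)) := by
    rw [hu]
    have : exp (t * (1 - p)) = exp t * exp (-(t * p)) := by
      rw [← exp_add]; ring_nf
    rw [this]; ring
  rw [key]
  calc u t * exp (-(t * p)) ≤ exp (t ^ 2 / 8 + t * p) * exp (-(t * p)) := by
        apply mul_le_mul_of_nonneg_right hut (exp_pos _).le
    _ = exp (t ^ 2 / 8) := by rw [← exp_add]; ring_nf

lemma hoeff_core {p : ℝ} (hp0 : 0 ≤ p) (hp1 : p ≤ 1) (t : ℝ) :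
    (1 - p) * exp (-(t * p)) + p * exp (t * (1 - p)) ≤ exp (t ^ 2 / 8) := by
  rcases le_or_gt 0 t with ht | ht
  · exact hoeff_half hp0 hp1 ht
  · have h := hoeff_half (p := 1 - p) (by linarith) (by linarith) (t := -t) (by linarith)
    have e1 : (1 - (1 - p)) = p := by ring
    have e2 : -(-t * (1 - p)) = t * (1 - p) := by ring
    have e3 : (-t) * (1 - (1 - p)) = -(t * p) := by ring
    have e4 : (-t) ^ 2 = t ^ 2 := by ring
    have e3' : -t * p = -(t * p) := by ring
    rw [e1, e2, e3', e4] at h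
    linarith

lemma bern_mgf {Ω : Type*} {mΩ : MeasurableSpace Ω} (μ : Measure Ω) [IsProbabilityMeasure μ]
    {S : Set Ω} (hS : MeasurableSet S) {p : ℝ} (hp0 : 0 ≤ p)
    (hμS : μ S = ENNReal.ofReal p) (t : ℝ) :
    mgf (fun ω => S.indicator 1 ω - p) μ t
      = (1 - p) * exp (-(t * p)) + p * exp (t * (1 - p)) := by
  have hfe : (fun ω => exp (t * (S.indicator 1 ω - p)))
      = fun ω => S.indicator (fun _ => exp (t * (1 - p)) - exp (-(t * p))) ω + exp (-(t * p)) := by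
    funext ω
    by_cases h : ω ∈ S
    · simp [Set.indicator_of_mem h]
    · rw [Set.indicator_of_notMem h, Set.indicator_of_notMem h]
      ring_nf
  rw [mgf, hfe]
  rw [integral_add ((integrable_const _).indicator hS) (integrable_const _),
    integral_indicator_const _ hS, integral_const]
  have : (μ S).toReal = p := by rw [hμS, ENNReal.toReal_ofReal hp0]
  simp only [measureReal_def, this, measure_univ, ENNReal.toReal_one, smul_eq_mul, one_smul]
  ring

lemma hoeff_tail {Ω : Type*} {mΩ : MeasurableSpace Ω} (μ : Measure Ω) [IsProbabilityMeasure μ]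
    (Z : ℕ → Ω → ℝ) (hZmeas : ∀ j, Measurable (Z j))
    (hind : iIndepFun Z μ)
    {p : ℝ} (hp0 : 0 ≤ p) (hp1 : p ≤ 1)
    (hmgf : ∀ j t, mgf (Z j) μ t = (1 - p) * exp (-(t * p)) + p * exp (t * (1 - p)))
    (hbdd : ∀ j ω, |Z j ω| ≤ 1)
    (n : ℕ) (δ : ℝ) (hδ : 0 < δ) :
    μ {ω | (n : ℝ) * δ / 2 ≤ ∑ j ∈ Finset.range n, Z j ω}
      ≤ ENNReal.ofReal (exp (-(n : ℝ) * δ ^ 2 / 2)) := by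
  set t : ℝ := 2 * δ with htdef
  have ht : 0 ≤ t := by positivity
  have h_int : ∀ j ∈ Finset.range n, Integrable (fun ω => exp (t * Z j ω)) μ := by
    intro j _
    apply Integrable.mono' (integrable_const (exp |t|))
    · exact (((hZmeas j).const_mul t).exp).aestronglyMeasurable
    · filter_upwards with ω
      rw [Real.norm_eq_abs, abs_exp, exp_le_exp]
      calc t * Z j ω ≤ |t * Z j ω| := le_abs_self _
        _ = |t| * |Z j ω| := abs_mul _ _
        _ ≤ |t| * 1 := by gcongr; exact hbdd j ω
        _ = |t| := mul_one _
  have hsum_int : Integrable (fun ω => exp (t * (∑ j ∈ Finset.range n, Z j) ω)) μ :=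
    hind.integrable_exp_mul_sum hZmeas h_int
  have hcher := measure_ge_le_exp_mul_mgf (X := ∑ j ∈ Finset.range n, Z j) (μ := μ)
    ((n : ℝ) * δ / 2) ht hsum_int
  have hmgfsum : mgf (∑ j ∈ Finset.range n, Z j) μ t = ∏ j ∈ Finset.range n, mgf (Z j) μ t :=
    hind.mgf_sum hZmeas _
  have hc : ∀ j, mgf (Z j) μ t ≤ exp (t ^ 2 / 8) := fun j => by
    rw [hmgf j t]; exact hoeff_core hp0 hp1 t
  have hprod : ∏ j ∈ Finset.range n, mgf (Z j) μ t ≤ exp ((n : ℝ) * t ^ 2 / 8) := by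
    calc ∏ j ∈ Finset.range n, mgf (Z j) μ t
        ≤ ∏ j ∈ Finset.range n, exp (t ^ 2 / 8) :=
          Finset.prod_le_prod (fun j _ => mgf_nonneg) (fun j _ => hc j)
      _ = exp (t ^ 2 / 8) ^ n := by rw [Finset.prod_const, Finset.card_range]
      _ = exp ((n : ℝ) * t ^ 2 / 8) := by rw [← exp_nat_mul]; ring_nf
  have hfinal : (μ {ω | (n : ℝ) * δ / 2 ≤ (∑ j ∈ Finset.range n, Z j) ω}).toReal
      ≤ exp (-(n : ℝ) * δ ^ 2 / 2) := by
    calc (μ _).toReal ≤ exp (-t * ((n : ℝ) * δ / 2)) * mgf (∑ j ∈ Finset.range n, Z j) μ t := hcher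
      _ ≤ exp (-t * ((n : ℝ) * δ / 2)) * exp ((n : ℝ) * t ^ 2 / 8) := by
          rw [hmgfsum]; exact mul_le_mul_of_nonneg_left hprod (exp_pos _).le
      _ = exp (-(n : ℝ) * δ ^ 2 / 2) := by rw [← exp_add]; congr 1; rw [htdef]; ring
  rw [ENNReal.le_ofReal_iff_toReal_le (measure_ne_top _ _) (exp_pos _).le]
  convert hfinal using 3
  simp [Finset.sum_apply]


theorem stmt_2 {Ω : Type*} {mΩ : MeasurableSpace Ω}
    (μ : Measure Ω) [IsProbabilityMeasure μ]
    {A : Type*} [Fintype A] [DecidableEq A] [MeasurableSpace A]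
    [MeasurableSingletonClass A]
    (X : ℕ → Ω → A)
    (hmeas : ∀ j, Measurable (X j))
    (hindep : iIndepFun X μ)
    (Q : A → ℝ) (hQ0 : ∀ i, 0 ≤ Q i) (hQ1 : ∑ i, Q i = 1)
    (hdist : ∀ j i, μ {ω | X j ω = i} = ENNReal.ofReal (Q i))
    (n : ℕ) (hn : 1 ≤ n) (δ : ℝ) (hδ : 0 < δ) :
    μ {ω | δ ≤ ∑ i,
        |(((Finset.range n).filter (fun j => X j ω = i)).card : ℝ) / n - Q i|}
      ≤ ENNReal.ofReal ((2 ^ (Fintype.card A) - 2) * Real.exp (-(n : ℝ) * δ ^ 2 / 2)) := by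
  classical
  rcases isEmpty_or_nonempty A with hA | hA
  · have : {ω | δ ≤ ∑ i,
        |(((Finset.range n).filter (fun j => X j ω = i)).card : ℝ) / n - Q i|} = ∅ := by
      ext ω; simp only [Set.mem_setOf_eq, Set.mem_empty_iff_false, iff_false, not_le]
      rw [Finset.sum_of_isEmpty]
      exact hδ
    rw [this, measure_empty]
    exact zero_le
  have hnpos : (0 : ℝ) < n := by exact_mod_cast hn
  -- per-subset data
  set a := Fintype.card A with ha
  have hapos : 1 ≤ a := Fintype.card_pos
  -- the family of subsets
  set PP : Finset (Finset A) :=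
    ((Finset.univ : Finset A).powerset.erase ∅).erase Finset.univ with hPP
  -- per-subset random variables
  set pB : Finset A → ℝ := fun B => ∑ i ∈ B, Q i with hpB
  have hpB0 : ∀ B, 0 ≤ pB B := fun B => Finset.sum_nonneg fun i _ => hQ0 i
  have hpB1 : ∀ B : Finset A, pB B ≤ 1 := by
    intro B
    rw [← hQ1]
    exact Finset.sum_le_sum_of_subset_of_nonneg (Finset.subset_univ B) fun i _ _ => hQ0 i
  set g : Finset A → A → ℝ := fun B x => (↑B : Set A).indicator 1 x - pB B with hgdef
  set Z : Finset A → ℕ → Ω → ℝ := fun B j => g B ∘ X j with hZdef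
  -- the inclusion
  have hincl : {ω | δ ≤ ∑ i,
        |(((Finset.range n).filter (fun j => X j ω = i)).card : ℝ) / n - Q i|}
      ⊆ ⋃ B ∈ PP, {ω | (n : ℝ) * δ / 2 ≤ ∑ j ∈ Finset.range n, Z B j ω} := by
    intro ω hω
    simp only [Set.mem_setOf_eq] at hω
    set f : A → ℝ := fun i =>
      (((Finset.range n).filter (fun j => X j ω = i)).card : ℝ) / n - Q i with hf
    set B : Finset A := Finset.univ.filter (fun i => 0 ≤ f i) with hB
    have hcards : ∑ i : A, (((Finset.range n).filter (fun j => X j ω = i)).card : ℝ) = n := by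
      rw [← Nat.cast_sum]
      congr 1
      rw [← Finset.card_eq_sum_card_fiberwise (fun j _ => Finset.mem_univ (X j ω)),
        Finset.card_range]
    have hfsum : ∑ i, f i = 0 := by
      simp only [hf, Finset.sum_sub_distrib, hQ1, ← Finset.sum_div, hcards]
      field_simp
      ring
    have habs : ∑ i ∈ B, f i - ∑ i ∈ Finset.univ.filter (fun i => ¬ 0 ≤ f i), f i
        = ∑ i, |f i| := by
      rw [← Finset.sum_filter_add_sum_filter_not Finset.univ (fun i => 0 ≤ f i) (fun i => |f i|)]
      rw [Finset.sum_congr rfl (fun i hi => abs_of_nonneg (Finset.mem_filter.1 hi).2),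
        Finset.sum_congr rfl (fun i hi => abs_of_neg (lt_of_not_ge (Finset.mem_filter.1 hi).2)),
        Finset.sum_neg_distrib]
      ring
    have hsplit : ∑ i ∈ B, f i + ∑ i ∈ Finset.univ.filter (fun i => ¬ 0 ≤ f i), f i = 0 := by
      rw [Finset.sum_filter_add_sum_filter_not]
      exact hfsum
    have hBhalf : δ / 2 ≤ ∑ i ∈ B, f i := by
      have : 2 * ∑ i ∈ B, f i = ∑ i, |f i| := by linarith
      linarith
    have hBne : B ≠ ∅ := by
      intro h
      rw [h, Finset.sum_empty] at hBhalf
      linarith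
    have hBnu : B ≠ Finset.univ := by
      intro h
      rw [h, hfsum] at hBhalf
      linarith
    have hBmem : B ∈ PP := by
      rw [hPP]
      exact Finset.mem_erase.2 ⟨hBnu, Finset.mem_erase.2 ⟨hBne, Finset.mem_powerset.2
        (Finset.subset_univ B)⟩⟩
    refine Set.mem_biUnion hBmem ?_
    simp only [Set.mem_setOf_eq]
    -- compute the sum of Z B j ω
    have hsum1 : ∑ j ∈ Finset.range n, ((↑B : Set A).indicator 1 (X j ω) : ℝ)
        = ((Finset.range n).filter (fun j => X j ω ∈ B)).card := by
      rw [Finset.card_filter]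
      push_cast
      refine Finset.sum_congr rfl fun j _ => ?_
      by_cases h : X j ω ∈ B <;> simp [h]
    have hsum2 : (((Finset.range n).filter (fun j => X j ω ∈ B)).card : ℝ)
        = ∑ i ∈ B, (((Finset.range n).filter (fun j => X j ω = i)).card : ℝ) := by
      rw [← Nat.cast_sum]
      congr 1
      rw [Finset.card_eq_sum_card_fiberwise (f := fun j => X j ω) (t := B)
        (s := (Finset.range n).filter (fun j => X j ω ∈ B))
        (fun j hj => (Finset.mem_filter.1 hj).2)]
      refine Finset.sum_congr rfl fun i hi => ?_
      congr 1
      rw [Finset.filter_filter]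
      refine Finset.filter_congr fun j _ => ?_
      constructor
      · exact fun h => h.2
      · exact fun h => ⟨show X j ω ∈ B by rw [h]; exact hi, h⟩
    have hZsum : ∑ j ∈ Finset.range n, Z B j ω = (n : ℝ) * ∑ i ∈ B, f i := by
      simp only [hZdef, hgdef, Function.comp_apply, Finset.sum_sub_distrib,
        Finset.sum_const, Finset.card_range, nsmul_eq_mul]
      rw [hsum1, hsum2]
      simp only [hf, hpB]
      rw [show ∑ i ∈ B, ((((Finset.range n).filter (fun j => X j ω = i)).card : ℝ) / n - Q i)
          = (∑ i ∈ B, (((Finset.range n).filter (fun j => X j ω = i)).card : ℝ)) / n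
            - ∑ i ∈ B, Q i from by rw [Finset.sum_sub_distrib, Finset.sum_div]]
      field_simp
    rw [hZsum]
    calc (n : ℝ) * δ / 2 = n * (δ / 2) := by ring
      _ ≤ n * ∑ i ∈ B, f i := by
          exact mul_le_mul_of_nonneg_left hBhalf hnpos.le
  -- the per-subset bound
  have hper : ∀ B ∈ PP, μ {ω | (n : ℝ) * δ / 2 ≤ ∑ j ∈ Finset.range n, Z B j ω}
      ≤ ENNReal.ofReal (exp (-(n : ℝ) * δ ^ 2 / 2)) := by
    intro B _
    have hgm : Measurable (g B) := measurable_of_countable _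
    have hZmeas : ∀ j, Measurable (Z B j) := fun j => hgm.comp (hmeas j)
    have hZind : iIndepFun (Z B) μ :=
      hindep.comp (fun _ => g B) (fun _ => hgm)
    have hμS : ∀ j, μ (X j ⁻¹' (↑B : Set A)) = ENNReal.ofReal (pB B) := by
      intro j
      have hpre : X j ⁻¹' (↑B : Set A) = ⋃ i ∈ B, {ω | X j ω = i} := by
        ext ω'
        simp [Set.mem_preimage]
      have hm : ∀ i ∈ B, MeasurableSet {ω | X j ω = i} :=
        fun i _ => (hmeas j) (MeasurableSet.singleton i)
      have hd : (↑B : Set A).PairwiseDisjoint fun i => {ω | X j ω = i} := by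
        intro i _ k _ hik
        simp only [Function.onFun, Set.disjoint_left]
        intro ω' h1 h2
        exact hik (h1.symm.trans h2)
      rw [hpre, measure_biUnion_finset hd hm]
      simp only [hpB]
      rw [ENNReal.ofReal_sum_of_nonneg (fun i _ => hQ0 i)]
      exact Finset.sum_congr rfl fun i _ => hdist j i
    have hmgfB : ∀ j t, mgf (Z B j) μ t
        = (1 - pB B) * exp (-(t * pB B)) + pB B * exp (t * (1 - pB B)) := by
      intro j t
      have hfun : Z B j = fun ω => (X j ⁻¹' (↑B : Set A)).indicator 1 ω - pB B := by
        funext ω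
        show (↑B : Set A).indicator 1 (X j ω) - pB B
          = (X j ⁻¹' (↑B : Set A)).indicator 1 ω - pB B
        congr 1
      rw [hfun]
      exact bern_mgf μ ((hmeas j) (Set.Finite.measurableSet (Set.toFinite _)))
        (hpB0 B) (hμS j) t
    have hbdd : ∀ j ω, |Z B j ω| ≤ 1 := by
      intro j ω
      rw [abs_le]
      simp only [hZdef, hgdef, Function.comp_apply]
      by_cases h : X j ω ∈ (↑B : Set A)
      · rw [Set.indicator_of_mem h]
        constructor
        · simp only [Pi.one_apply]; linarith [hpB1 B]
        · simp only [Pi.one_apply]; linarith [hpB0 B]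
      · rw [Set.indicator_of_notMem h]
        constructor
        · linarith [hpB1 B]
        · linarith [hpB0 B]
    exact hoeff_tail μ (Z B) hZmeas hZind (hpB0 B) (hpB1 B) hmgfB hbdd n δ hδ
  -- put it together
  have hmem1 : (∅ : Finset A) ∈ (Finset.univ : Finset A).powerset :=
    Finset.mem_powerset.2 (Finset.empty_subset _)
  have hmem2 : (Finset.univ : Finset A) ∈ (Finset.univ : Finset A).powerset.erase ∅ :=
    Finset.mem_erase.2 ⟨Finset.nonempty_iff_ne_empty.1 Finset.univ_nonempty,
      Finset.mem_powerset.2 (Finset.Subset.refl _)⟩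
  have hcardPP : PP.card = 2 ^ a - 2 := by
    rw [hPP, Finset.card_erase_of_mem hmem2, Finset.card_erase_of_mem hmem1,
      Finset.card_powerset, Finset.card_univ, ← ha]
    omega
  calc μ _ ≤ μ (⋃ B ∈ PP, {ω | (n : ℝ) * δ / 2 ≤ ∑ j ∈ Finset.range n, Z B j ω}) :=
        measure_mono hincl
    _ ≤ ∑ B ∈ PP, μ {ω | (n : ℝ) * δ / 2 ≤ ∑ j ∈ Finset.range n, Z B j ω} :=
        measure_biUnion_finset_le PP _
    _ ≤ ∑ _x ∈ PP, ENNReal.ofReal (exp (-(n : ℝ) * δ ^ 2 / 2)) :=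
        Finset.sum_le_sum hper
    _ = (PP.card : ENNReal) * ENNReal.ofReal (exp (-(n : ℝ) * δ ^ 2 / 2)) := by
        rw [Finset.sum_const, nsmul_eq_mul]
    _ = ENNReal.ofReal ((2 ^ a - 2) * exp (-(n : ℝ) * δ ^ 2 / 2)) := by
        rw [hcardPP]
        have h2r : (0:ℝ) ≤ 2 ^ a - 2 := by
          have : (2:ℝ) = 2 ^ 1 := (pow_one 2).symm
          nlinarith [pow_le_pow_right₀ (by norm_num : (1:ℝ) ≤ 2) hapos]
        rw [ENNReal.ofReal_mul h2r]
        congr 1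
        rw [← ENNReal.ofReal_natCast]
        congr 1
        have h2 : (2 : ℕ) ≤ 2 ^ a := by
          calc (2 : ℕ) = 2 ^ 1 := (pow_one 2).symm
            _ ≤ 2 ^ a := Nat.pow_le_pow_right (by norm_num) hapos
        push_cast [Nat.cast_sub h2]
        ring
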